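/- For n > 4, the minimum edge-cuts of the wheel W_n (with n−1 rim vertices of degree 3 and one hub of degree n−1) are exactly the n−1 sets of three edges incident to a rim vertex, and the mincut graph X(W_n) is isomorphic to the cycle C_{n−1}. -/

import Mathlib

open SimpleGraph

variable {V : Type*}

/-- `X` is an edge-cut of `G`: a set of edges of `G` whose deletion disconnects `G`. -/
def IsEdgeCut (G : SimpleGraph V) (X : Set (Sym2 V)) : Prop :=
  X ⊆ G.edgeSet ∧ ¬ (G.deleteEdges X).Connected

/-- `X` is a minimum edge-cut (mincut) of `G`. -/
def IsMinCut (G : SimpleGraph V) (X : Set (Sym2 V)) : Prop :=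
  IsEdgeCut G X ∧ ∀ Y : Set (Sym2 V), IsEdgeCut G Y → X.ncard ≤ Y.ncard

/-- The edge connectivity of `G`: minimum cardinality of an edge-cut. -/
noncomputable def edgeConn (G : SimpleGraph V) : ℕ :=
  sInf {n | ∃ X : Set (Sym2 V), IsEdgeCut G X ∧ X.ncard = n}

/-- The mincut graph `X(G)`: intersection graph of the minimum edge-cuts of `G`. -/
def mincutGraph (G : SimpleGraph V) : SimpleGraph {X : Set (Sym2 V) // IsMinCut G X} :=
  SimpleGraph.fromRel (fun A B => (A.1 ∩ B.1).Nonempty)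

/-- The wheel graph with `k` rim vertices and a hub (`none`). -/
def wheelGraph (k : Nat) : SimpleGraph (Option (Fin k)) :=
  SimpleGraph.fromRel (fun a b =>
    (a = none ∧ b ≠ none) ∨
      ∃ i j : Fin k, a = some i ∧ b = some j ∧ (SimpleGraph.cycleGraph k).Adj i j)

section Aux

variable {m : ℕ}

open Fin.CommRing Fin.NatCast

lemma fin_two_ne_zero : (2 : Fin (m+4)) ≠ 0 := by
  intro h
  have := congrArg Fin.val h
  simp [Fin.val_two] at this
  rw [Nat.mod_eq_of_lt (by omega)] at this
  omega

lemma fin_one_ne_zero' : (1 : Fin (m+4)) ≠ 0 := by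
  intro h
  have := congrArg Fin.val h
  simp at this

lemma fin_add_one_ne (i : Fin (m+4)) : i + 1 ≠ i := by
  intro h
  exact fin_one_ne_zero' (by linear_combination h)

lemma fin_sub_one_ne (i : Fin (m+4)) : i - 1 ≠ i := by
  intro h
  exact fin_one_ne_zero' (by linear_combination -h)

lemma fin_add_ne_sub (i : Fin (m+4)) : i + 1 ≠ i - 1 := by
  intro h
  exact fin_two_ne_zero (by linear_combination h)

lemma wheel_adj_none_some (i : Fin (m+4)) : (wheelGraph (m+4)).Adj none (some i) := by
  simp [wheelGraph, fromRel_adj]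

lemma wheel_adj_some_some {i j : Fin (m+4)} :
    (wheelGraph (m+4)).Adj (some i) (some j) ↔ (cycleGraph (m+4)).Adj i j := by
  simp only [wheelGraph, fromRel_adj]
  constructor
  · rintro ⟨hne, (⟨h,-⟩|⟨i',j',h1,h2,h3⟩) | (⟨h,-⟩|⟨i',j',h1,h2,h3⟩)⟩
    · exact absurd h (by simp)
    · cases h1; cases h2; exact h3
    · exact absurd h (by simp)
    · cases h1; cases h2; exact h3.symm
  · intro h
    exact ⟨by simpa using h.ne, Or.inl (Or.inr ⟨i, j, rfl, rfl, h⟩)⟩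

lemma cyc_adj {i j : Fin (m + 4)} :
    (cycleGraph (m + 4)).Adj i j ↔ j = i + 1 ∨ j = i - 1 := by
  rw [cycleGraph_adj (n := m+2)]
  constructor
  · rintro (h | h)
    · right; rw [sub_eq_iff_eq_add] at h; rw [h]; ring
    · left; rw [sub_eq_iff_eq_add] at h; rw [h]; ring
  · rintro (rfl | rfl)
    · right; ring
    · left; ring

lemma inc_eq (i : Fin (m+4)) :
    (wheelGraph (m+4)).incidenceSet (some i) =
      {s(none, some i), s(some i, some (i+1)), s(some i, some (i-1))} := by
  ext e
  induction e using Sym2.ind with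
  | _ a b =>
    simp only [incidenceSet, Set.mem_setOf_eq, mem_edgeSet, Sym2.mem_iff, Set.mem_insert_iff,
      Set.mem_singleton_iff, Sym2.eq_iff]
    constructor
    · rintro ⟨hadj, (rfl | rfl)⟩
      · match b with
        | none => left; right; exact ⟨rfl, rfl⟩
        | some j =>
          have := cyc_adj.mp (wheel_adj_some_some.mp hadj)
          rcases this with rfl | rfl
          · right; left; left; exact ⟨rfl, rfl⟩
          · right; right; left; exact ⟨rfl, rfl⟩
      · match a with
        | none => left; left; exact ⟨rfl, rfl⟩
        | some j =>
          have := cyc_adj.mp (wheel_adj_some_some.mp hadj.symm)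
          rcases this with rfl | rfl
          · right; left; right; exact ⟨rfl, rfl⟩
          · right; right; right; exact ⟨rfl, rfl⟩
    · intro h
      rcases h with (⟨h1,h2⟩|⟨h1,h2⟩)|(⟨h1,h2⟩|⟨h1,h2⟩)|(⟨h1,h2⟩|⟨h1,h2⟩) <;> subst h1 <;> subst h2 <;>
      first
      | exact ⟨wheel_adj_none_some i, by simp⟩
      | exact ⟨(wheel_adj_none_some i).symm, by simp⟩
      | exact ⟨wheel_adj_some_some.mpr (cyc_adj.mpr (Or.inl rfl)), by simp⟩
      | exact ⟨(wheel_adj_some_some.mpr (cyc_adj.mpr (Or.inl rfl))).symm, by simp⟩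
      | exact ⟨wheel_adj_some_some.mpr (cyc_adj.mpr (Or.inr rfl)), by simp⟩
      | exact ⟨(wheel_adj_some_some.mpr (cyc_adj.mpr (Or.inr rfl))).symm, by simp⟩

lemma rotate_lemma (T : Set (Fin (m+4))) :
    ∀ d : ℕ, ∀ a : Fin (m+4), a ∈ T → a + (d : Fin (m+4)) ∉ T →
      ∃ x, x ∈ T ∧ x + 1 ∉ T := by
  intro d
  induction d with
  | zero => intro a ha hb; simp at hb; exact absurd ha hb
  | succ d ih =>
    intro a ha hb
    by_cases h1 : a + 1 ∈ T
    · refine ih (a + 1) h1 ?_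
      have : a + 1 + (d : Fin (m+4)) = a + ((d+1 : ℕ) : Fin (m+4)) := by
        push_cast; ring
      rwa [this]
    · exact ⟨a, ha, h1⟩

lemma exists_boundary {T : Set (Fin (m+4))} (hT : T.Nonempty) (hT' : Tᶜ.Nonempty) :
    ∃ x, x ∈ T ∧ x + 1 ∉ T := by
  obtain ⟨a, ha⟩ := hT
  obtain ⟨b, hb⟩ := hT'
  refine rotate_lemma T (b - a).val a ha ?_
  rw [Fin.cast_val_eq_self]
  simpa using hb

lemma cut_main {X : Set (Sym2 (Option (Fin (m+4))))} (hX : IsEdgeCut (wheelGraph (m+4)) X) :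
    (∃ i : Fin (m+4), (wheelGraph (m+4)).incidenceSet (some i) ⊆ X) ∨ 4 ≤ X.ncard := by
  obtain ⟨hXsub, hH⟩ := hX
  set H := (wheelGraph (m+4)).deleteEdges X with hHdef
  set T : Set (Fin (m+4)) := {i | ¬ H.Reachable none (some i)} with hTdef
  have hreach : ∀ i, i ∉ T → H.Reachable none (some i) := fun i hi => not_not.mp hi
  have hTne : T.Nonempty := by
    rw [Set.nonempty_iff_ne_empty]
    intro h
    apply hH
    have hall : ∀ v : Option (Fin (m+4)), H.Reachable none v := by
      intro v
      match v with
      | none => exact Reachable.refl none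
      | some i => exact hreach i (by simp [h])
    exact ⟨fun a b => (hall a).symm.trans (hall b)⟩
  have hspoke : ∀ i ∈ T, s(none, some i) ∈ X := by
    intro i hi
    by_contra hmem
    have hA : H.Adj none (some i) := by
      rw [hHdef, SimpleGraph.deleteEdges_adj]
      exact ⟨wheel_adj_none_some i, hmem⟩
    exact hi hA.reachable
  have hbd : ∀ i ∈ T, ∀ j, j ∉ T → (cycleGraph (m+4)).Adj i j → s(some j, some i) ∈ X := by
    intro i hi j hj hadj
    by_contra hmem
    have hA : H.Adj (some j) (some i) := by
      rw [hHdef, SimpleGraph.deleteEdges_adj]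
      exact ⟨wheel_adj_some_some.mpr hadj.symm, hmem⟩
    exact hi ((hreach j hj).trans hA.reachable)
  by_cases htwo : ∃ i ∈ T, ∃ j ∈ T, i ≠ j
  · right
    obtain ⟨i, hi, j, hj, hij⟩ := htwo
    by_cases hcompl : Tᶜ.Nonempty
    · obtain ⟨x, hx, hx1⟩ := exists_boundary hTne hcompl
      obtain ⟨y, hy, hy1⟩ := exists_boundary hcompl (by simpa using hTne)
      rw [Set.mem_compl_iff] at hy
      rw [Set.notMem_compl_iff] at hy1
      have hC : s(some x, some (x+1)) ∈ X := by
        have := hbd x hx (x+1) hx1 (cyc_adj.mpr (Or.inl rfl))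
        rwa [Sym2.eq_swap] at this
      have hD : s(some y, some (y+1)) ∈ X := by
        exact hbd (y+1) hy1 y hy (cyc_adj.mpr (Or.inr (by ring)))
      have hsub : ({s(none, some i), s(none, some j),
          s(some x, some (x+1)), s(some y, some (y+1))} :
            Set (Sym2 (Option (Fin (m+4))))) ⊆ X := by
        rintro e (rfl | rfl | rfl | rfl)
        · exact hspoke i hi
        · exact hspoke j hj
        · exact hC
        · exact hD
      have hCD : s(some x, some (x+1)) ≠ s(some y, some (y+1)) := by
        rw [Ne, Sym2.eq_iff]
        rintro (⟨h1, h2⟩ | ⟨h1, h2⟩)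
        · cases h1; exact hy hx
        · have h1' : x = y + 1 := by injection h1
          have h2' : x + 1 = y := by injection h2
          exact fin_two_ne_zero (by linear_combination h2' - h1')
      have hcard : ({s(none, some i), s(none, some j),
          s(some x, some (x+1)), s(some y, some (y+1))} :
            Set (Sym2 (Option (Fin (m+4))))).ncard = 4 := by
        rw [Set.ncard_insert_of_notMem (by simp [Sym2.eq_iff, hij]),
          Set.ncard_insert_of_notMem (by simp [Sym2.eq_iff]),
          Set.ncard_pair hCD]
      calc 4 = _ := hcard.symm
        _ ≤ X.ncard := Set.ncard_le_ncard hsub (Set.toFinite X)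
    · -- T = univ : four spokes
      have hall : ∀ z : Fin (m+4), z ∈ T := by
        intro z
        by_contra hz
        exact hcompl ⟨z, hz⟩
      have hsub : ({s(none, some (0 : Fin (m+4))), s(none, some 1),
          s(none, some 2), s(none, some 3)} :
            Set (Sym2 (Option (Fin (m+4))))) ⊆ X := by
        rintro e (rfl | rfl | rfl | rfl) <;> exact hspoke _ (hall _)
      have h01 : (0 : Fin (m+4)) ≠ 1 := by
        intro h; have := congrArg Fin.val h; simp at this
      have h02 : (0 : Fin (m+4)) ≠ 2 := by
        intro h; have := congrArg Fin.val h; simp [Fin.val_two] at this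
        rw [Nat.mod_eq_of_lt (by omega)] at this
        omega
      have h03 : (0 : Fin (m+4)) ≠ 3 := by
        intro h; have := congrArg Fin.val h
        have h3 : ((3 : Fin (m+4)) : ℕ) = 3 % (m+4) := rfl
        rw [h3, Nat.mod_eq_of_lt (by omega), Fin.val_zero] at this
        omega
      have h12 : (1 : Fin (m+4)) ≠ 2 := by
        intro h; exact h01 (by linear_combination h)
      have h13 : (1 : Fin (m+4)) ≠ 3 := by
        intro h; exact h02 (by linear_combination h)
      have h23 : (2 : Fin (m+4)) ≠ 3 := by
        intro h; exact h01 (by linear_combination h)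
      have hcard : ({s(none, some (0 : Fin (m+4))), s(none, some 1),
          s(none, some 2), s(none, some 3)} :
            Set (Sym2 (Option (Fin (m+4))))).ncard = 4 := by
        rw [Set.ncard_insert_of_notMem (by simp [Sym2.eq_iff, h01, h02, h03]),
          Set.ncard_insert_of_notMem (by simp [Sym2.eq_iff, h12, h13]),
          Set.ncard_pair (by simp [Sym2.eq_iff, h23])]
      calc 4 = _ := hcard.symm
        _ ≤ X.ncard := Set.ncard_le_ncard hsub (Set.toFinite X)
  · left
    obtain ⟨i, hi⟩ := hTne
    have hsingle : ∀ j ∈ T, j = i := by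
      intro j hj
      by_contra hne
      exact htwo ⟨j, hj, i, hi, hne⟩
    have h1 : i + 1 ∉ T := fun h => fin_add_one_ne i (hsingle _ h)
    have h2 : i - 1 ∉ T := fun h => fin_sub_one_ne i (hsingle _ h)
    refine ⟨i, ?_⟩
    rw [inc_eq]
    rintro e (rfl | rfl | rfl)
    · exact hspoke i hi
    · have := hbd i hi (i+1) h1 (cyc_adj.mpr (Or.inl rfl))
      rwa [Sym2.eq_swap] at this
    · have := hbd i hi (i-1) h2 (cyc_adj.mpr (Or.inr rfl))
      rwa [Sym2.eq_swap] at this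

lemma inc_ncard (i : Fin (m+4)) :
    ((wheelGraph (m+4)).incidenceSet (some i)).ncard = 3 := by
  rw [inc_eq,
    Set.ncard_insert_of_notMem (by simp [Sym2.eq_iff]),
    Set.ncard_pair (by
      rw [Ne, Sym2.eq_iff]
      rintro (⟨-, h2⟩ | ⟨h1, -⟩)
      · have h2' : i + 1 = i - 1 := by injection h2
        exact fin_add_ne_sub i h2'
      · have h1' : i = i - 1 := by injection h1
        exact fin_sub_one_ne i h1'.symm)]

lemma inc_cut (i : Fin (m+4)) :
    IsEdgeCut (wheelGraph (m+4)) ((wheelGraph (m+4)).incidenceSet (some i)) := by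
  refine ⟨(wheelGraph (m+4)).incidenceSet_subset (some i), ?_⟩
  intro hc
  have h1 : ∀ u, ¬ ((wheelGraph (m+4)).deleteEdges
      ((wheelGraph (m+4)).incidenceSet (some i))).Adj (some i) u := by
    intro u hadj
    rw [SimpleGraph.deleteEdges_adj] at hadj
    exact hadj.2 ⟨((wheelGraph (m+4)).mem_edgeSet).mpr hadj.1, Sym2.mem_mk_left _ _⟩
  obtain ⟨w⟩ := hc.preconnected (some i) none
  cases w with
  | cons h p => exact h1 _ h

lemma inc_mincut (i : Fin (m+4)) :
    IsMinCut (wheelGraph (m+4)) ((wheelGraph (m+4)).incidenceSet (some i)) := by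
  refine ⟨inc_cut i, fun Y hY => ?_⟩
  rw [inc_ncard]
  rcases cut_main hY with ⟨j, hj⟩ | h4
  · calc (3:ℕ) = ((wheelGraph (m+4)).incidenceSet (some j)).ncard := (inc_ncard j).symm
      _ ≤ Y.ncard := Set.ncard_le_ncard hj (Set.toFinite Y)
  · omega

lemma mincut_iff (X : Set (Sym2 (Option (Fin (m+4))))) :
    IsMinCut (wheelGraph (m+4)) X ↔
      ∃ i : Fin (m+4), X = (wheelGraph (m+4)).incidenceSet (some i) := by
  constructor
  · intro hM
    have hle : X.ncard ≤ 3 := by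
      have := hM.2 _ (inc_cut (0 : Fin (m+4)))
      rwa [inc_ncard] at this
    rcases cut_main hM.1 with ⟨i, hi⟩ | h4
    · exact ⟨i, (Set.eq_of_subset_of_ncard_le hi
        (by rw [inc_ncard]; exact hle) (Set.toFinite X)).symm⟩
    · exfalso; omega
  · rintro ⟨i, rfl⟩
    exact inc_mincut i

lemma inter_iff {i j : Fin (m+4)} (hij : i ≠ j) :
    ((wheelGraph (m+4)).incidenceSet (some i) ∩
      (wheelGraph (m+4)).incidenceSet (some j)).Nonempty ↔
        (cycleGraph (m+4)).Adj i j := by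
  constructor
  · rintro ⟨e, he1, he2⟩
    have hmem : some i ∈ e ∧ some j ∈ e := ⟨he1.2, he2.2⟩
    have he : e = s(some i, some j) :=
      (Sym2.mem_and_mem_iff (by simpa using hij)).mp hmem
    rw [he] at he1
    exact wheel_adj_some_some.mp (((wheelGraph (m+4)).mem_edgeSet).mp he1.1)
  · intro h
    rcases cyc_adj.mp h with rfl | rfl
    · refine ⟨s(some i, some (i+1)), ?_, ?_⟩
      · rw [inc_eq]
        exact Set.mem_insert_iff.mpr (Or.inr (Set.mem_insert _ _))
      · rw [inc_eq]
        have he : s(some i, some (i+1)) = s(some (i+1), some (i+1-1)) := by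
          rw [show i+1-1 = i from by ring, Sym2.eq_swap]
        rw [he]
        exact Set.mem_insert_iff.mpr (Or.inr (Set.mem_insert_iff.mpr (Or.inr rfl)))
    · refine ⟨s(some i, some (i-1)), ?_, ?_⟩
      · rw [inc_eq]
        exact Set.mem_insert_iff.mpr (Or.inr (Set.mem_insert_iff.mpr (Or.inr rfl)))
      · rw [inc_eq]
        have he : s(some i, some (i-1)) = s(some (i-1), some (i-1+1)) := by
          rw [show i-1+1 = i from by ring, Sym2.eq_swap]
        rw [he]
        exact Set.mem_insert_iff.mpr (Or.inr (Set.mem_insert _ _))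

lemma iso_lemma :
    Nonempty (mincutGraph (wheelGraph (m+4)) ≃g SimpleGraph.cycleGraph (m+4)) := by
  set W := wheelGraph (m+4)
  let f : Fin (m+4) → {X : Set (Sym2 (Option (Fin (m+4)))) // IsMinCut W X} :=
    fun i => ⟨W.incidenceSet (some i), inc_mincut i⟩
  have hinj : Function.Injective f := by
    intro i j h
    have h' : W.incidenceSet (some i) = W.incidenceSet (some j) :=
      congrArg Subtype.val h
    have hm : s(none, some i) ∈ W.incidenceSet (some j) := by
      rw [← h', inc_eq]; left; rfl
    rw [inc_eq] at hm
    rcases hm with hm | hm | hm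
    · rw [Sym2.eq_iff] at hm
      rcases hm with ⟨-, h2⟩ | ⟨h1, -⟩
      · injection h2
      · exact absurd h1 (by simp)
    · rw [Sym2.eq_iff] at hm
      rcases hm with ⟨h1, -⟩ | ⟨h1, -⟩ <;> exact absurd h1 (by simp)
    · rw [Set.mem_singleton_iff, Sym2.eq_iff] at hm
      rcases hm with ⟨h1, -⟩ | ⟨h1, -⟩ <;> exact absurd h1 (by simp)
  have hsurj : Function.Surjective f := by
    intro A
    obtain ⟨i, hi⟩ := (mincut_iff A.1).mp A.2
    exact ⟨i, Subtype.ext hi.symm⟩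
  have hadj : ∀ i j : Fin (m+4),
      (mincutGraph W).Adj (f i) (f j) ↔ (cycleGraph (m+4)).Adj i j := by
    intro i j
    simp only [mincutGraph, fromRel_adj]
    constructor
    · rintro ⟨hne, h | h⟩
      · exact (inter_iff (show i ≠ j from fun he => hne (by rw [he]))).mp h
      · exact ((inter_iff (show j ≠ i from fun he => hne (by rw [he]))).mp h).symm
    · intro h
      refine ⟨fun he => h.ne (hinj he), Or.inl ((inter_iff h.ne).mpr h)⟩
  let g : SimpleGraph.cycleGraph (m+4) ≃g mincutGraph W :=
    ⟨Equiv.ofBijective f ⟨hinj, hsurj⟩, @fun a b => hadj a b⟩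
  exact ⟨g.symm⟩

end Aux

theorem mincutGraph_wheel (n : ℕ) (hn : 4 < n) :
    (∀ X : Set (Sym2 (Option (Fin (n - 1)))), IsMinCut (wheelGraph (n - 1)) X ↔
        ∃ i : Fin (n - 1), X = (wheelGraph (n - 1)).incidenceSet (some i)) ∧
      Nonempty (mincutGraph (wheelGraph (n - 1)) ≃g SimpleGraph.cycleGraph (n - 1)) := by
  obtain ⟨m, hm⟩ : ∃ m, n - 1 = m + 4 := ⟨n - 5, by omega⟩
  rw [hm]
  exact ⟨fun X => mincut_iff X, iso_lemma⟩
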